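/- In the discrete auto rate-tuning model, if the effective learning rate ratio is below 1 at time step i, i.e. R(i) < 1, then it strictly increases in the next step: R(i+1) > R(i). -/

import Mathlib

/-- Discrete auto rate-tuning model: if the ELR ratio is below 1, it strictly
increases in the next step. -/
theorem elr_ratio_lt_one_increases
    (cl ck : ℝ) (hcl : 0 < cl) (hck : 0 < ck)
    (lam : ℕ → ℝ) (hlam : ∀ i, 0 < lam i)
    (sl sk : ℕ → ℝ) (hsl0 : 0 < sl 0) (hsk0 : 0 < sk 0)
    (hsl : ∀ i, sl (i + 1) = sl i + (lam i) ^ 2 * cl ^ 2 / sl i)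
    (hsk : ∀ i, sk (i + 1) = sk i + (lam i) ^ 2 * ck ^ 2 / sk i)
    (R : ℕ → ℝ) (hR : ∀ i, R i = cl * sk i / (ck * sl i))
    (i : ℕ) (hRi : R i < 1) :
    R i < R (i + 1) := by
  have hpos : ∀ j, 0 < sl j ∧ 0 < sk j := by
    intro j
    induction j with
    | zero => exact ⟨hsl0, hsk0⟩
    | succ n ih =>
      obtain ⟨h1, h2⟩ := ih
      have := hlam n
      refine ⟨?_, ?_⟩
      · rw [hsl n]; positivity
      · rw [hsk n]; exact add_pos h2 (div_pos (by positivity) h2)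
  obtain ⟨ha, hb⟩ := hpos i
  obtain ⟨ha', hb'⟩ := hpos (i + 1)
  have hL : 0 < (lam i) ^ 2 := pow_pos (hlam i) 2
  -- from R i < 1 : cl * sk i < ck * sl i
  have hlt : cl * sk i < ck * sl i := by
    rw [hR i, div_lt_one (by positivity)] at hRi
    exact hRi
  rw [hR i, hR (i + 1), div_lt_div_iff₀ (by positivity) (by positivity)]
  have key : sl i * sk (i+1) > sk i * sl (i+1) := by
    rw [hsl i, hsk i]
    have h1 : sl i * (sk i + lam i ^ 2 * ck ^ 2 / sk i)
        = sl i * sk i + lam i ^ 2 * ck ^ 2 * (sl i / sk i) := by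
      field_simp
    have h2 : sk i * (sl i + lam i ^ 2 * cl ^ 2 / sl i)
        = sl i * sk i + lam i ^ 2 * cl ^ 2 * (sk i / sl i) := by
      field_simp
    rw [h1, h2]
    have h3 : cl ^ 2 * (sk i / sl i) < ck ^ 2 * (sl i / sk i) := by
      rw [← mul_div_assoc, ← mul_div_assoc, div_lt_div_iff₀ ha hb]
      nlinarith [mul_pos hcl hb, mul_pos hck ha]
    nlinarith [h3]
  nlinarith [key, mul_pos hcl hck]
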